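/- (Affine Farkas' Lemma over ℚ) Let v₁,…,vₙ,u ∈ ℚᵏ and r₁,…,rₙ,s ∈ ℚ. Suppose the set S = {x ∈ ℚᵏ : 0 ≤ vᵢ·x + rᵢ for all i = 1,…,n} is non-empty. Then the following are equivalent: (1) 0 ≤ u·x + s for all x ∈ S; (2) there exist nonnegative rationals q₁,…,qₙ such that u = Σᵢ qᵢvᵢ and Σᵢ qᵢrᵢ ≤ s. -/

import Mathlib

open Matrix Finset

/-- Homogeneous Farkas lemma over ℚ, by induction on the number of constraints. -/
lemma farkas_homog : ∀ (n : ℕ) {k : ℕ} (w : Fin n → Fin k → ℚ) (c : Fin k → ℚ),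
    (∀ x : Fin k → ℚ, (∀ i, 0 ≤ w i ⬝ᵥ x) → 0 ≤ c ⬝ᵥ x) →
    ∃ q : Fin n → ℚ, (∀ i, 0 ≤ q i) ∧ c = ∑ i, q i • w i := by
  intro n
  induction n with
  | zero =>
    intro k w c h
    have h0 : 0 ≤ c ⬝ᵥ (-c) := h (-c) (fun i => i.elim0)
    have hc : c = 0 := by
      rw [← dotProduct_self_eq_zero (v := c)]
      have : 0 ≤ c ⬝ᵥ c := Finset.sum_nonneg fun j _ => mul_self_nonneg _
      have h0' : c ⬝ᵥ c ≤ 0 := by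
        have := h0
        rw [dotProduct_neg] at this
        linarith
      linarith
    exact ⟨fun i => i.elim0, fun i => i.elim0, by simp [hc]⟩
  | succ n ih =>
    intro k w c h
    by_cases hc : ∀ x : Fin k → ℚ, (∀ i : Fin n, 0 ≤ w i.castSucc ⬝ᵥ x) → 0 ≤ c ⬝ᵥ x
    · obtain ⟨q, hq, hqc⟩ := ih (fun i => w i.castSucc) c hc
      refine ⟨Fin.snoc q 0, ?_, ?_⟩
      · intro i
        refine Fin.lastCases ?_ ?_ i <;> simp [hq]
      · rw [Fin.sum_univ_castSucc]
        simpa using hqc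
    · push_neg at hc
      obtain ⟨xh, hxh, hcxh⟩ := hc
      set wl := w (Fin.last n) with hwl
      have hd : wl ⬝ᵥ xh < 0 := by
        by_contra hge
        push_neg at hge
        refine absurd (h xh fun i => ?_) (not_le.mpr hcxh)
        refine Fin.lastCases ?_ ?_ i
        · exact hge
        · exact hxh
      set d := wl ⬝ᵥ xh with hdd
      have hdne : d ≠ 0 := ne_of_lt hd
      set w' : Fin n → Fin k → ℚ := fun i => w i.castSucc - ((w i.castSucc ⬝ᵥ xh) / d) • wl with hw'
      set c' : Fin k → ℚ := c - ((c ⬝ᵥ xh) / d) • wl with hc'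
      have key : ∀ x : Fin k → ℚ, (∀ i, 0 ≤ w' i ⬝ᵥ x) → 0 ≤ c' ⬝ᵥ x := by
        intro x hx
        set y : Fin k → ℚ := x - ((wl ⬝ᵥ x) / d) • xh with hy
        have hly : wl ⬝ᵥ y = 0 := by
          simp only [hy, dotProduct_sub, dotProduct_smul, smul_eq_mul]
          field_simp
          rw [← hdd]; ring
        have hiy : ∀ i : Fin n, w i.castSucc ⬝ᵥ y = w' i ⬝ᵥ x := by
          intro i
          simp only [hy, hw', dotProduct_sub, sub_dotProduct, dotProduct_smul, smul_dotProduct,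
            smul_eq_mul]
          ring
        have hcy : c ⬝ᵥ y = c' ⬝ᵥ x := by
          simp only [hy, hc', dotProduct_sub, sub_dotProduct, dotProduct_smul, smul_dotProduct,
            smul_eq_mul]
          ring
        rw [← hcy]
        refine h y fun i => ?_
        refine Fin.lastCases ?_ ?_ i
        · exact le_of_eq hly.symm
        · intro i; rw [hiy i]; exact hx i
      obtain ⟨q, hq, hqc⟩ := ih w' c' key
      set ql : ℚ := (c ⬝ᵥ xh - ∑ i, q i * (w i.castSucc ⬝ᵥ xh)) / d with hql
      have hqlnn : 0 ≤ ql := by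
        rw [hql]
        have : 0 ≤ ∑ i, q i * (w i.castSucc ⬝ᵥ xh) :=
          Finset.sum_nonneg fun i _ => mul_nonneg (hq i) (hxh i)
        exact div_nonneg_iff.mpr (Or.inr ⟨by linarith, le_of_lt hd⟩)
      refine ⟨Fin.snoc q ql, ?_, ?_⟩
      · intro i; refine Fin.lastCases ?_ ?_ i <;> simp [hqlnn, hq]
      · rw [Fin.sum_univ_castSucc]
        simp only [Fin.snoc_castSucc, Fin.snoc_last]
        have expand : ∑ i : Fin n, q i • w' i
            = ∑ i : Fin n, q i • w i.castSucc
              - (∑ i : Fin n, q i * ((w i.castSucc ⬝ᵥ xh) / d)) • wl := by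
          rw [Finset.sum_smul]
          rw [← Finset.sum_sub_distrib]
          congr 1
          ext i
          rw [hw', smul_sub, smul_smul]
        have : c = c' + ((c ⬝ᵥ xh) / d) • wl := by rw [hc']; abel
        rw [this, hqc, expand]
        have hql' : ql = (c ⬝ᵥ xh)/d - ∑ i, q i * ((w i.castSucc ⬝ᵥ xh) / d) := by
          rw [hql]
          rw [sub_div, Finset.sum_div]
          congr 1
          exact Finset.sum_congr rfl fun i _ => by ring
        rw [← hwl, hql', sub_smul]
        abel

lemma dot_snoc {k : ℕ} (a : Fin k → ℚ) (α : ℚ) (x : Fin k → ℚ) (t : ℚ) :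
    (Fin.snoc a α : Fin (k+1) → ℚ) ⬝ᵥ (Fin.snoc x t) = a ⬝ᵥ x + α * t := by
  simp [dotProduct, Fin.sum_univ_castSucc]

theorem affine_farkas (k n : ℕ) (v : Fin n → Fin k → ℚ) (u : Fin k → ℚ)
    (r : Fin n → ℚ) (s : ℚ)
    (hS : ∃ x : Fin k → ℚ, ∀ i : Fin n, 0 ≤ (∑ j : Fin k, v i j * x j) + r i) :
    (∀ x : Fin k → ℚ, (∀ i : Fin n, 0 ≤ (∑ j : Fin k, v i j * x j) + r i) →
        0 ≤ (∑ j : Fin k, u j * x j) + s) ↔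
      ∃ q : Fin n → ℚ, (∀ i : Fin n, 0 ≤ q i) ∧
        u = ∑ i : Fin n, q i • v i ∧ (∑ i : Fin n, q i * r i) ≤ s := by
  have dot_eq : ∀ (a x : Fin k → ℚ), a ⬝ᵥ x = ∑ j, a j * x j := fun a x => rfl
  constructor
  · intro h
    obtain ⟨x₀, hx₀⟩ := hS
    -- homogenization
    set W : Fin (n+1) → Fin (k+1) → ℚ :=
      Fin.snoc (fun i => Fin.snoc (v i) (r i)) (Fin.snoc 0 1) with hW
    set C : Fin (k+1) → ℚ := Fin.snoc u s with hC
    have key : ∀ y : Fin (k+1) → ℚ, (∀ i, 0 ≤ W i ⬝ᵥ y) → 0 ≤ C ⬝ᵥ y := by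
      intro y hy
      set x : Fin k → ℚ := Fin.init y with hx
      set t : ℚ := y (Fin.last k) with ht
      have hyx : y = Fin.snoc x t := (Fin.snoc_init_self y).symm
      have ht0 : 0 ≤ t := by
        have := hy (Fin.last n)
        rw [hyx] at this
        simpa [hW, dot_snoc] using this
      have hvi : ∀ i : Fin n, 0 ≤ v i ⬝ᵥ x + r i * t := by
        intro i
        have := hy i.castSucc
        rw [hyx] at this
        simpa [hW, dot_snoc] using this
      rw [hyx, hC, dot_snoc]
      rcases eq_or_lt_of_le ht0 with htz | htpos
      · -- t = 0 : use a point of S and a ray argument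
        have hvx : ∀ i : Fin n, 0 ≤ v i ⬝ᵥ x := by
          intro i; have := hvi i; rw [← htz] at this; linarith
        have hray : ∀ lam : ℚ, 0 ≤ lam → 0 ≤ u ⬝ᵥ x₀ + lam * (u ⬝ᵥ x) + s := by
          intro lam hlam
          have hfeas : ∀ i : Fin n, 0 ≤ (∑ j, v i j * (x₀ + lam • x) j) + r i := by
            intro i
            have h1 := hx₀ i
            have h2 := hvx i
            rw [← dot_eq] at h1 ⊢
            have : v i ⬝ᵥ (x₀ + lam • x) = v i ⬝ᵥ x₀ + lam * (v i ⬝ᵥ x) := by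
              rw [dotProduct_add, dotProduct_smul]; simp [smul_eq_mul]
            rw [this]
            nlinarith
          have := h (x₀ + lam • x) hfeas
          rw [← dot_eq] at this
          have hexp : u ⬝ᵥ (x₀ + lam • x) = u ⬝ᵥ x₀ + lam * (u ⬝ᵥ x) := by
            rw [dotProduct_add, dotProduct_smul]; simp [smul_eq_mul]
          rw [hexp] at this
          linarith
        have hux : 0 ≤ u ⬝ᵥ x := by
          by_contra hneg
          push_neg at hneg
          have h0 := hray 0 le_rfl
          set lam : ℚ := (u ⬝ᵥ x₀ + s + 1) / (-(u ⬝ᵥ x)) with hlam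
          have hlamnn : 0 ≤ lam := div_nonneg (by linarith) (by linarith)
          have := hray lam hlamnn
          rw [hlam] at this
          have hne : -(u ⬝ᵥ x) ≠ 0 := by linarith
          have : u ⬝ᵥ x₀ + ((u ⬝ᵥ x₀ + s + 1) / (-(u ⬝ᵥ x))) * (u ⬝ᵥ x) + s
              = -1 := by have hne' : u ⬝ᵥ x ≠ 0 := ne_of_lt hneg; field_simp; ring
          linarith [hray lam hlamnn, this]
        rw [← htz]; linarith
      · -- t > 0 : scale
        have hfeas : ∀ i : Fin n, 0 ≤ (∑ j, v i j * (t⁻¹ • x) j) + r i := by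
          intro i
          rw [← dot_eq]
          have : v i ⬝ᵥ (t⁻¹ • x) = t⁻¹ * (v i ⬝ᵥ x) := by
            rw [dotProduct_smul]; simp [smul_eq_mul]
          rw [this]
          have := hvi i
          have h2 : 0 ≤ t⁻¹ * (v i ⬝ᵥ x + r i * t) := by positivity
          have ht' : t ≠ 0 := ne_of_gt htpos
          field_simp at h2 ⊢
          nlinarith [mul_pos htpos htpos]
        have := h (t⁻¹ • x) hfeas
        rw [← dot_eq] at this
        have hexp : u ⬝ᵥ (t⁻¹ • x) = t⁻¹ * (u ⬝ᵥ x) := by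
          rw [dotProduct_smul]; simp [smul_eq_mul]
        rw [hexp] at this
        have ht' : t ≠ 0 := ne_of_gt htpos
        have h2 : 0 ≤ t * (t⁻¹ * (u ⬝ᵥ x) + s) := mul_nonneg htpos.le this
        have h3 : t * (t⁻¹ * (u ⬝ᵥ x) + s) = u ⬝ᵥ x + s * t := by
          field_simp
        linarith
    obtain ⟨Q, hQ, hQC⟩ := farkas_homog (n+1) W C key
    refine ⟨fun i => Q i.castSucc, fun i => hQ i.castSucc, ?_, ?_⟩
    · funext j
      have := congrFun hQC (j.castSucc : Fin (k+1))
      rw [hC] at this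
      simp only [Fin.snoc_castSucc] at this
      rw [this]
      rw [Fin.sum_univ_castSucc]
      simp only [Finset.sum_apply, Pi.smul_apply, smul_eq_mul, hW, Fin.snoc_castSucc,
        Fin.snoc_last, Pi.zero_apply]
      simp
    · have := congrFun hQC (Fin.last k)
      rw [hC] at this
      simp only [Fin.snoc_last] at this
      rw [this, Fin.sum_univ_castSucc]
      simp only [Finset.sum_apply, Pi.smul_apply, smul_eq_mul, hW, Fin.snoc_castSucc,
        Fin.snoc_last]
      have := hQ (Fin.last n)
      simp
      linarith [Finset.sum_le_sum (fun i (_ : i ∈ Finset.univ) => le_refl (Q i.castSucc * r i))]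
  · rintro ⟨q, hq, hu, hqr⟩ x hx
    have : ∑ j, u j * x j = ∑ i, q i * (v i ⬝ᵥ x) := by
      rw [← dot_eq, hu]
      simp only [dotProduct, Finset.sum_apply, Pi.smul_apply, smul_eq_mul, Finset.sum_mul,
        Finset.mul_sum]
      rw [Finset.sum_comm]
      exact Finset.sum_congr rfl fun i _ => Finset.sum_congr rfl fun j _ => by ring
    rw [this]
    have hterm : ∀ i : Fin n, 0 ≤ q i * (v i ⬝ᵥ x + r i) := by
      intro i
      exact mul_nonneg (hq i) (by rw [dot_eq]; exact hx i)
    have hsum : 0 ≤ ∑ i, q i * (v i ⬝ᵥ x + r i) := Finset.sum_nonneg fun i _ => hterm i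
    have hexp : ∑ i, q i * (v i ⬝ᵥ x + r i) = (∑ i, q i * (v i ⬝ᵥ x)) + ∑ i, q i * r i := by
      rw [← Finset.sum_add_distrib]
      exact Finset.sum_congr rfl fun i _ => by ring
    rw [hexp] at hsum
    linarith
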